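/- Let α, β : Γ → Δ be graph homomorphisms with a common retract ρ : Δ → Γ (ρ ∘ α = id_Γ = ρ ∘ β). Then every element g of AΓ with (Aα)g = (Aβ)g lies in the subgroup of AΓ generated by the vertices v of Γ satisfying αv = βv. -/

import Mathlib

/-- A (reflexive, symmetric) graph: a set of vertices with a reflexive
symmetric relation. -/
structure Gph : Type 1 where
  V : Type
  rel : V → V → Prop
  refl : ∀ v, rel v v
  symm : ∀ {v w}, rel v w → rel w v

/-- A homomorphism of graphs: a function on vertices preserving the relation. -/
@[ext]
structure GphHom (Γ Δ : Gph) where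
  toFun : Γ.V → Δ.V
  map_rel : ∀ {v w}, Γ.rel v w → Δ.rel (toFun v) (toFun w)

/-- The identity graph homomorphism. -/
def GphHom.id (Γ : Gph) : GphHom Γ Γ :=
  ⟨fun v => v, fun h => h⟩

/-- Composition of graph homomorphisms. -/
def GphHom.comp {Γ Δ Θ : Gph} (ψ : GphHom Δ Θ) (φ : GphHom Γ Δ) : GphHom Γ Θ :=
  ⟨fun v => ψ.toFun (φ.toFun v), fun h => ψ.map_rel (φ.map_rel h)⟩

/-- The commutator relators of the right-angled Artin group of `Γ`. -/
def raagRels (Γ : Gph) : Set (FreeGroup Γ.V) :=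
  { r | ∃ v w, Γ.rel v w ∧
      r = FreeGroup.of v * FreeGroup.of w * (FreeGroup.of v)⁻¹ * (FreeGroup.of w)⁻¹ }

/-- The right-angled Artin group of a graph `Γ`: generated by the vertices,
with commutation relations given by the edges. -/
abbrev Raag (Γ : Gph) : Type :=
  PresentedGroup (raagRels Γ)

/-- The image of a vertex `v` as a generator of the right-angled Artin group. -/
def Raag.of {Γ : Gph} (v : Γ.V) : Raag Γ :=
  PresentedGroup.of v

/-- Related vertices commute in the right-angled Artin group. -/
theorem Raag.commute_of {Γ : Gph} {v w : Γ.V} (h : Γ.rel v w) :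
    Commute (Raag.of v) (Raag.of w) := by
  have h1 : (PresentedGroup.mk (raagRels Γ))
      (FreeGroup.of v * FreeGroup.of w * (FreeGroup.of v)⁻¹ * (FreeGroup.of w)⁻¹) = 1 := by
    apply (QuotientGroup.eq_one_iff _).2
    exact Subgroup.subset_normalClosure ⟨v, w, h, rfl⟩
  rw [← commutatorElement_eq_one_iff_commute]
  simp only [commutatorElement_def, map_mul, map_inv] at h1
  exact h1

/-- The universal property of the right-angled Artin group. -/
def Raag.lift {Γ : Gph} {G : Type*} [Group G] (f : Γ.V → G)
    (hf : ∀ {v w}, Γ.rel v w → Commute (f v) (f w)) : Raag Γ →* G :=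
  PresentedGroup.toGroup (f := f) (by
    rintro r ⟨v, w, hvw, rfl⟩
    have := commutatorElement_eq_one_iff_commute.2 (hf hvw)
    rw [commutatorElement_def] at this
    simpa only [map_mul, map_inv, FreeGroup.lift_apply_of] using this)

@[simp]
theorem Raag.lift_of {Γ : Gph} {G : Type*} [Group G] (f : Γ.V → G)
    (hf : ∀ {v w}, Γ.rel v w → Commute (f v) (f w)) (v : Γ.V) :
    Raag.lift f hf (Raag.of v) = f v :=
  PresentedGroup.toGroup.of _

theorem Raag.hom_ext {Γ : Gph} {G : Type*} [Group G] {f g : Raag Γ →* G}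
    (h : ∀ v, f (Raag.of v) = g (Raag.of v)) : f = g :=
  PresentedGroup.ext h

/-- The group homomorphism `Aφ` induced by a graph homomorphism `φ`. -/
def GphHom.map {Γ Δ : Gph} (φ : GphHom Γ Δ) : Raag Γ →* Raag Δ :=
  Raag.lift (fun v => Raag.of (φ.toFun v)) (fun h => Raag.commute_of (φ.map_rel h))

@[simp]
theorem GphHom.map_of {Γ Δ : Gph} (φ : GphHom Γ Δ) (v : Γ.V) :
    φ.map (Raag.of v) = Raag.of (φ.toFun v) :=
  Raag.lift_of _ (fun h => Raag.commute_of (φ.map_rel h)) v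

/-- The commutation graph of a group `G`: vertices are elements of `G`,
related exactly when they commute. -/
abbrev commGraph (G : Type) [Group G] : Gph where
  V := G
  rel g h := g * h = h * g
  refl _ := rfl
  symm h := h.symm

/-- `AC G`: the right-angled Artin group of the commutation graph of `G`. -/
abbrev AC (G : Type) [Group G] : Type :=
  Raag (commGraph G)

/-- `ACf : ACG →* ACH`, `[g] ↦ [f g]`, induced by a group homomorphism `f`. -/
def ACmap {G H : Type} [Group G] [Group H] (f : G →* H) : AC G →* AC H :=
  GphHom.map (Γ := commGraph G) (Δ := commGraph H)
    ⟨f, fun {a b} h => show f a * f b = f b * f a by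
      rw [← map_mul, show a * b = b * a from h, map_mul]⟩

@[simp]
theorem ACmap_of {G H : Type} [Group G] [Group H] (f : G →* H) (g : G) :
    ACmap f (Raag.of (Γ := commGraph G) g) = Raag.of (Γ := commGraph H) (f g) :=
  GphHom.map_of _ _

/-- The counit `ε_G : ACG →* G`, `[g] ↦ g`. -/
def ACcounit (G : Type) [Group G] : AC G →* G :=
  Raag.lift (Γ := commGraph G) (fun g => g) (fun h => h)

@[simp]
theorem ACcounit_of {G : Type} [Group G] (g : G) :
    ACcounit G (Raag.of (Γ := commGraph G) g) = g :=
  Raag.lift_of (Γ := commGraph G) (fun g => g) (fun h => h) g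

/-- The comultiplication `δ_G : ACG →* AC(ACG)`, `[g] ↦ [[g]]`. -/
def ACcomul (G : Type) [Group G] : AC G →* AC (AC G) :=
  Raag.lift (Γ := commGraph G)
    (fun g => Raag.of (Γ := commGraph (AC G)) (Raag.of (Γ := commGraph G) g))
    (fun h => Raag.commute_of (Raag.commute_of h))

@[simp]
theorem ACcomul_of {G : Type} [Group G] (g : G) :
    ACcomul G (Raag.of (Γ := commGraph G) g) =
      Raag.of (Γ := commGraph (AC G)) (Raag.of (Γ := commGraph G) g) :=
  Raag.lift_of (Γ := commGraph G) _ (fun h => Raag.commute_of (Raag.commute_of h)) g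

/-- The canonical `AC`-coalgebra structure map on a right-angled Artin group,
sending each vertex generator `v` to `[v]`. -/
def raagCoalgStr (Γ : Gph) : Raag Γ →* AC (Raag Γ) :=
  Raag.lift (fun v => Raag.of (Γ := commGraph (Raag Γ)) (Raag.of v))
    (fun h => Raag.commute_of (Raag.commute_of h))

@[simp]
theorem raagCoalgStr_of {Γ : Gph} (v : Γ.V) :
    raagCoalgStr Γ (Raag.of v) = Raag.of (Γ := commGraph (Raag Γ)) (Raag.of v) :=
  Raag.lift_of _ (fun h => Raag.commute_of (Raag.commute_of h)) v

/-- An `AC`-coalgebra structure on a group `G` is a group homomorphism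
`𝔤 : G →* ACG` satisfying the counit and coassociativity laws. -/
def IsACCoalgebra {G : Type} [Group G] (𝔤 : G →* AC G) : Prop :=
  (ACcounit G).comp 𝔤 = MonoidHom.id G ∧ (ACmap 𝔤).comp 𝔤 = (ACcomul G).comp 𝔤

/-- `f` is an `AC`-cohomomorphism from `(G, 𝔤)` to `(H, 𝔥)`. -/
def IsACCohom {G H : Type} [Group G] [Group H]
    (𝔤 : G →* AC G) (𝔥 : H →* AC H) (f : G →* H) : Prop :=
  𝔥.comp f = (ACmap f).comp 𝔤
/-- If `α, β : Γ → Δ` admit a common retract `ρ`, then every `g ∈ AΓ` with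
`(Aα)g = (Aβ)g` lies in the subgroup of `AΓ` generated by the vertices `v`
with `αv = βv`. -/
theorem mem_closure_of_equalized {Γ Δ : Gph} (α β : GphHom Γ Δ)
    (ρ : GphHom Δ Γ) (h₁ : ρ.comp α = GphHom.id Γ) (h₂ : ρ.comp β = GphHom.id Γ)
    (g : Raag Γ) (hg : α.map g = β.map g) :
    g ∈ Subgroup.closure (Raag.of '' {v | α.toFun v = β.toFun v}) := by
  classical
  have hρα : ∀ v, ρ.toFun (α.toFun v) = v := fun v =>
    congrFun (congrArg GphHom.toFun h₁) v
  have hρβ : ∀ v, ρ.toFun (β.toFun v) = v := fun v =>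
    congrFun (congrArg GphHom.toFun h₂) v
  -- the idempotent killing non-equalized vertices
  have ecomm : ∀ {v w : Γ.V}, Γ.rel v w →
      Commute (if α.toFun v = β.toFun v then Raag.of v else 1)
        (if α.toFun w = β.toFun w then Raag.of w else 1) := by
    intro v w h
    split_ifs
    · exact Raag.commute_of h
    · exact Commute.one_right _
    · exact Commute.one_left _
    · exact Commute.one_left _
  set e : Raag Γ →* Raag Γ :=
    Raag.lift (fun v => if α.toFun v = β.toFun v then Raag.of v else 1) ecomm with he
  -- the folding map back
  have Fcomm : ∀ {w w' : Δ.V}, Δ.rel w w' →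
      Commute (if ∃ v, α.toFun v = w then Raag.of (ρ.toFun w) else 1)
        (if ∃ v, α.toFun v = w' then Raag.of (ρ.toFun w') else 1) := by
    intro w w' h
    split_ifs
    · exact Raag.commute_of (ρ.map_rel h)
    · exact Commute.one_right _
    · exact Commute.one_left _
    · exact Commute.one_left _
  set F : Raag Δ →* Raag Γ :=
    Raag.lift (fun w => if ∃ v, α.toFun v = w then Raag.of (ρ.toFun w) else 1) Fcomm with hF
  have hFof : ∀ w, F (Raag.of w) = if ∃ v, α.toFun v = w then Raag.of (ρ.toFun w) else 1 :=
    fun w => Raag.lift_of _ Fcomm w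
  have heof : ∀ v, e (Raag.of v) = if α.toFun v = β.toFun v then Raag.of v else 1 :=
    fun v => Raag.lift_of _ ecomm v
  have hFα : F.comp α.map = MonoidHom.id (Raag Γ) := by
    apply Raag.hom_ext
    intro v
    simp only [MonoidHom.comp_apply, GphHom.map_of, MonoidHom.id_apply, hFof]
    rw [if_pos ⟨v, rfl⟩, hρα]
  have hFβ : F.comp β.map = e := by
    apply Raag.hom_ext
    intro v
    simp only [MonoidHom.comp_apply, GphHom.map_of, hFof, heof]
    by_cases hv : α.toFun v = β.toFun v
    · rw [if_pos ⟨v, hv⟩, if_pos hv, hρβ]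
    · rw [if_neg, if_neg hv]
      rintro ⟨v', hv'⟩
      have : v' = v := by
        have := congrArg ρ.toFun hv'
        rwa [hρα, hρβ] at this
      exact hv (this ▸ hv')
  have key : g = e g := by
    have h1 : F (α.map g) = g := congrFun (congrArg DFunLike.coe hFα) g
    have h2 : F (β.map g) = e g := congrFun (congrArg DFunLike.coe hFβ) g
    calc g = F (α.map g) := h1.symm
    _ = F (β.map g) := by rw [hg]
    _ = e g := h2
  rw [key]
  -- every element in the range of e lies in the closure
  have : ∀ x : Raag Γ, e x ∈ Subgroup.closure (Raag.of '' {v | α.toFun v = β.toFun v}) := by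
    intro x
    induction x using QuotientGroup.induction_on with
    | H w =>
      induction w using FreeGroup.induction_on with
      | C1 =>
        show e 1 ∈ _
        rw [map_one]; exact Subgroup.one_mem _
      | of v =>
        show e (Raag.of v) ∈ _
        rw [heof]
        split_ifs with hv
        · exact Subgroup.subset_closure ⟨v, hv, rfl⟩
        · exact Subgroup.one_mem _
      | inv_of v ih =>
        show e (Raag.of v)⁻¹ ∈ _
        rw [map_inv]
        exact Subgroup.inv_mem _ ih
      | mul a b iha ihb =>
        show e (PresentedGroup.mk (raagRels Γ) a * PresentedGroup.mk (raagRels Γ) b) ∈ _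
        rw [map_mul]
        exact Subgroup.mul_mem _ iha ihb
  exact this g
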